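/- The generalized hypergeometric value satisfies ${}_3F_2\left(\frac{1}{6},\frac{5}{6},\frac{1}{2};1,\frac{3}{2};1\right)=\frac{3\sqrt{3}}{2\pi}\log(2+\sqrt{3})$. -/

import Mathlib

open scoped Real

/-- Pochhammer symbol `(a)_n = a(a+1)⋯(a+n-1)`. -/
noncomputable def poch (a : ℝ) (n : ℕ) : ℝ := ∏ i ∈ Finset.range n, (a + i)

/-- Generalized hypergeometric series `₃F₂(a,b,c;d,e;x)`. -/
noncomputable def F32 (a b c d e x : ℝ) : ℝ :=
  ∑' n : ℕ, poch a n * poch b n * poch c n / (poch d n * poch e n * n.factorial) * x ^ n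

namespace Hyp

/-- `A n = (1/6)_n (5/6)_n / ((3/2)_n n!)`. -/
noncomputable def A (n : ℕ) : ℝ := poch (1/6) n * poch (5/6) n / (poch (3/2) n * n.factorial)

/-- `B n = (1/2)_n / n!`. -/
noncomputable def B (n : ℕ) : ℝ := poch (1/2) n / poch 1 n

lemma poch_pos {a : ℝ} (ha : 0 < a) (n : ℕ) : 0 < poch a n :=
  Finset.prod_pos fun i _ => by positivity

lemma poch_succ (a : ℝ) (n : ℕ) : poch a (n+1) = poch a n * (a + n) :=
  Finset.prod_range_succ _ _

lemma poch_one (n : ℕ) : poch 1 n = n.factorial := by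
  induction n with
  | zero => simp [poch]
  | succ n ih => rw [poch_succ, ih]; push_cast [Nat.factorial_succ]; ring

lemma poch_three_half (n : ℕ) : poch (3/2) n = poch (1/2) n * (2*n+1) := by
  induction n with
  | zero => simp [poch]
  | succ n ih =>
    rw [poch_succ, poch_succ, ih]; push_cast; ring

lemma poch_mul_le (n : ℕ) : poch (1/6) n * poch (5/6) n ≤ poch (1/2) n ^ 2 := by
  induction n with
  | zero => simp [poch]
  | succ n ih =>
    rw [poch_succ, poch_succ, poch_succ]
    have h1 := (poch_pos (by norm_num : (0:ℝ) < 1/6) n).le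
    have h2 := (poch_pos (by norm_num : (0:ℝ) < 5/6) n).le
    have h3 := (poch_pos (by norm_num : (0:ℝ) < 1/2) n).le
    have hn : (0:ℝ) ≤ (n:ℝ) := Nat.cast_nonneg n
    have key : ((1:ℝ)/6+(n:ℝ))*((5:ℝ)/6+n) ≤ ((1:ℝ)/2+n)^2 := by nlinarith
    calc poch (1/6) n * (1/6 + ↑n) * (poch (5/6) n * (5/6 + ↑n))
        = (poch (1/6) n * poch (5/6) n) * ((1/6+(n:ℝ))*(5/6+n)) := by ring
      _ ≤ poch (1/2) n ^ 2 * ((1/2+(n:ℝ))^2) := by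
          apply mul_le_mul ih key (by positivity) (by positivity)
      _ = (poch (1/2) n * (1/2 + ↑n)) ^ 2 := by ring

lemma poch_half_le (n : ℕ) : poch (1/2) n ≤ poch 1 n := by
  induction n with
  | zero => simp [poch]
  | succ n ih =>
    rw [poch_succ, poch_succ]
    have h3 := (poch_pos (by norm_num : (0:ℝ) < 1/2) n).le
    have hn : (0:ℝ) ≤ (n:ℝ) := Nat.cast_nonneg n
    nlinarith

/-- `(1/2)_n^2 * (2n+1) ≤ (n!)^2`. -/
lemma poch_half_sq_le (n : ℕ) : poch (1/2) n ^ 2 * (2*n+1) ≤ poch 1 n ^ 2 := by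
  induction n with
  | zero => simp [poch]
  | succ n ih =>
    rw [poch_succ, poch_succ]
    have h3 := (poch_pos (by norm_num : (0:ℝ) < 1/2) n).le
    have h1 := (poch_pos (by norm_num : (0:ℝ) < 1) n).le
    have hn : (0:ℝ) ≤ (n:ℝ) := Nat.cast_nonneg n
    push_cast
    have key : ((1:ℝ)/2 + (n:ℝ))^2 * (2*((n:ℝ)+1)+1) ≤ (1+(n:ℝ))^2 * (2*(n:ℝ)+1) := by nlinarith [Nat.cast_nonneg (α := ℝ) n]
    calc (poch (1/2) n * (1/2 + n)) ^ 2 * (2 * (↑n + 1) + 1)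
        = poch (1/2) n ^2 * ((1/2+(n:ℝ))^2 * (2*(n+1)+1)) := by ring
      _ ≤ poch (1/2) n ^2 * ((1+(n:ℝ))^2 * (2*n+1)) := by
          exact mul_le_mul_of_nonneg_left key (by positivity)
      _ = poch (1/2) n ^2 * (2*(n:ℝ)+1) * (1+n)^2 := by ring
      _ ≤ poch 1 n ^2 * (1+(n:ℝ))^2 := by nlinarith
      _ = (poch 1 n * (1 + (n:ℝ)))^2 := by ring

lemma A_pos (n : ℕ) : 0 < A n := by
  unfold A
  have := poch_pos (by norm_num : (0:ℝ) < 1/6) n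
  have := poch_pos (by norm_num : (0:ℝ) < 5/6) n
  have := poch_pos (by norm_num : (0:ℝ) < 3/2) n
  have := n.factorial_pos
  positivity

lemma B_pos (n : ℕ) : 0 < B n := by
  unfold B
  have := poch_pos (by norm_num : (0:ℝ) < 1/2) n
  have := poch_pos (by norm_num : (0:ℝ) < 1) n
  positivity

lemma A_le_one (n : ℕ) : A n ≤ 1 := by
  unfold A
  have h3 := poch_pos (by norm_num : (0:ℝ) < 1/2) n
  have h32 := poch_pos (by norm_num : (0:ℝ) < 3/2) n
  have hf : (0:ℝ) < n.factorial := by exact_mod_cast n.factorial_pos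
  rw [div_le_one (by positivity), poch_three_half]
  have l1 := poch_mul_le n
  have l2 := poch_half_le n
  rw [poch_one] at l2
  have hn : (1:ℝ) ≤ 2*(n:ℝ)+1 := by nlinarith [Nat.cast_nonneg (α := ℝ) n]
  nlinarith [mul_le_mul_of_nonneg_left l2 h3.le]

/-- key recurrence `A (n+1) ((2n+3)(2n+2)) = A n ((2n+1)^2 - 4/9)`. -/
lemma A_rec (n : ℕ) :
    A (n+1) * ((2*(n:ℝ)+3) * (2*(n:ℝ)+2)) = A n * ((2*(n:ℝ)+1)^2 - 4/9) := by
  unfold A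
  rw [poch_succ, poch_succ, poch_succ, Nat.factorial_succ]
  have h32 := poch_pos (by norm_num : (0:ℝ) < 3/2) n
  have hf : (0:ℝ) < n.factorial := by exact_mod_cast n.factorial_pos
  have hn3 : (3:ℝ)/2 + n ≠ 0 := by positivity
  have hn1 : ((n:ℝ)+1) ≠ 0 := by positivity
  field_simp
  push_cast
  ring

/-- `A n * B n ≤ 1/(2n+1)^2`. -/
lemma AB_le (n : ℕ) : A n * B n ≤ 1/(2*(n:ℝ)+1)^2 := by
  unfold A B
  have h3 := poch_pos (by norm_num : (0:ℝ) < 1/2) n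
  have h32 := poch_pos (by norm_num : (0:ℝ) < 3/2) n
  have h16 := poch_pos (by norm_num : (0:ℝ) < 1/6) n
  have h56 := poch_pos (by norm_num : (0:ℝ) < 5/6) n
  have hf : (0:ℝ) < n.factorial := by exact_mod_cast n.factorial_pos
  have hn : (0:ℝ) < 2*(n:ℝ)+1 := by positivity
  rw [poch_three_half, poch_one, div_mul_div_comm, div_le_div_iff₀ (by positivity) (by positivity)]
  have l1 := poch_mul_le n
  have l2 := poch_half_sq_le n
  rw [poch_one] at l2
  nlinarith [mul_le_mul_of_nonneg_right l1 (mul_nonneg h3.le (mul_nonneg hn.le hn.le)),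
    mul_le_mul_of_nonneg_right l2 (mul_nonneg h3.le hn.le)]

lemma summable_sq_geom {r : ℝ} (h0 : 0 ≤ r) (h1 : r < 1) :
    Summable (fun n : ℕ => (2*(n:ℝ)+1)^2 * r^n) := by
  have hn : ‖r‖ < 1 := by rwa [Real.norm_eq_abs, abs_of_nonneg h0]
  have h2 := summable_pow_mul_geometric_of_norm_lt_one (R := ℝ) 2 hn
  have hA := summable_pow_mul_geometric_of_norm_lt_one (R := ℝ) 1 hn
  have hB := summable_pow_mul_geometric_of_norm_lt_one (R := ℝ) 0 hn
  have := ((h2.mul_left 4).add (hA.mul_left 4)).add hB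
  apply this.congr
  intro n
  push_cast
  ring

lemma summable_AB : Summable (fun n => A n * B n) := by
  have hs : Summable (fun n : ℕ => 1/((n:ℝ)+1)^2) := by
    have := (summable_nat_add_iff (f := fun n : ℕ => 1/(n:ℝ)^2) 1).mpr
      (Real.summable_one_div_nat_pow.mpr one_lt_two)
    exact this.congr fun n => by push_cast; ring_nf
  apply Summable.of_nonneg_of_le (fun n => (mul_pos (A_pos n) (B_pos n)).le) _ hs
  intro n
  refine (AB_le n).trans ?_
  have h1 : (0:ℝ) < (n:ℝ)+1 := by positivity
  apply one_div_le_one_div_of_le (by positivity)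
  nlinarith [Nat.cast_nonneg (α := ℝ) n]

noncomputable def g (n : ℕ) (θ : ℝ) : ℝ := A n * Real.sin θ ^ (2*n+1)

noncomputable def g1 (n : ℕ) (θ : ℝ) : ℝ :=
  A n * (2*(n:ℝ)+1) * (Real.sin θ ^ (2*n) * Real.cos θ)

noncomputable def g2 (n : ℕ) (θ : ℝ) : ℝ :=
  A n * (2*(n:ℝ)+1) *
    ((2*(n:ℝ)) * Real.sin θ ^ (2*n-1) * Real.cos θ * Real.cos θ - Real.sin θ ^ (2*n) * Real.sin θ)

lemma hasDerivAt_g (n : ℕ) (θ : ℝ) : HasDerivAt (g n) (g1 n θ) θ := by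
  have h := ((Real.hasDerivAt_sin θ).pow (2*n+1)).const_mul (A n)
  unfold g g1
  refine h.congr_deriv ?_
  simp only [show 2*n+1-1 = 2*n from by omega]
  push_cast; ring

lemma hasDerivAt_g1 (n : ℕ) (θ : ℝ) : HasDerivAt (g1 n) (g2 n θ) θ := by
  have h := (((Real.hasDerivAt_sin θ).pow (2*n)).mul (Real.hasDerivAt_cos θ)).const_mul
    (A n * (2*(n:ℝ)+1))
  unfold g1 g2
  refine h.congr_deriv ?_
  push_cast [Pi.pow_apply]; ring

lemma abs_A_mul (n : ℕ) : |A n| = A n := abs_of_pos (A_pos n)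

lemma r_pow_pred {r : ℝ} (hr0 : 0 < r) (hr1 : r ≤ 1) (n : ℕ) :
    r ^ (2*n-1) ≤ (r^2)^n / r := by
  cases n with
  | zero =>
    simp only [Nat.mul_zero, Nat.zero_sub, pow_zero, one_mul]
    rw [le_div_iff₀ hr0]; nlinarith
  | succ n =>
    apply le_of_eq
    rw [← pow_mul, eq_div_iff (ne_of_gt hr0), ← pow_succ]
    congr 1

lemma r_le_one_pow {r : ℝ} (hr0 : 0 < r) (hr1 : r ≤ 1) {n m : ℕ} (h : n ≤ m) :
    r ^ m ≤ r ^ n :=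
  pow_le_pow_of_le_one hr0.le hr1 h

section bounds
variable {r y : ℝ} (hr0 : 0 < r) (hr1 : r ≤ 1) (hs : |Real.sin y| ≤ r)

noncomputable def u (r : ℝ) (n : ℕ) : ℝ := (2*(n:ℝ)+1)^2 * (r^2)^n / r

include hr0 hr1 hs

lemma sin_pow_le (k : ℕ) : |Real.sin y| ^ k ≤ r ^ k :=
  pow_le_pow_left₀ (abs_nonneg _) hs k

lemma g_bound (n : ℕ) : ‖g n y‖ ≤ u r n := by
  have h1 : |Real.sin y|^(2*n+1) ≤ r^(2*n+1) := sin_pow_le hr0 hr1 hs _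
  have hA : |A n| ≤ 1 := by rw [abs_A_mul]; exact A_le_one n
  have hrp : r^(2*n+1) ≤ (r^2)^n / r :=
    (r_le_one_pow hr0 hr1 (by omega : 2*n-1 ≤ 2*n+1)).trans (r_pow_pred hr0 hr1 n)
  have hsq : (1:ℝ) ≤ (2*(n:ℝ)+1)^2 := by nlinarith [Nat.cast_nonneg (α := ℝ) n]
  have hppos : (0:ℝ) ≤ (r^2)^n / r := by positivity
  calc ‖g n y‖ = |A n| * |Real.sin y|^(2*n+1) := by
        rw [g, Real.norm_eq_abs, abs_mul, abs_pow]
    _ ≤ 1 * r^(2*n+1) := mul_le_mul hA h1 (pow_nonneg (abs_nonneg _) _) one_pos.le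
    _ ≤ 1 * ((r^2)^n / r) := by linarith
    _ ≤ (2*(n:ℝ)+1)^2 * ((r^2)^n / r) := by nlinarith
    _ = u r n := by rw [u]; ring

lemma g1_bound (n : ℕ) : ‖g1 n y‖ ≤ u r n := by
  have h1 : |Real.sin y|^(2*n) ≤ r^(2*n) := sin_pow_le hr0 hr1 hs _
  have hA : |A n| ≤ 1 := by rw [abs_A_mul]; exact A_le_one n
  have hc : |Real.cos y| ≤ 1 := Real.abs_cos_le_one y
  have hn1 : (1:ℝ) ≤ 2*(n:ℝ)+1 := by nlinarith [Nat.cast_nonneg (α := ℝ) n]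
  have hrp : r^(2*n) ≤ (r^2)^n / r * (2*(n:ℝ)+1) := by
    rw [div_mul_eq_mul_div, le_div_iff₀ hr0, ← pow_mul]
    nlinarith [pow_nonneg hr0.le (2*n)]
  calc ‖g1 n y‖ = |A n| * |2*(n:ℝ)+1| * (|Real.sin y|^(2*n) * |Real.cos y|) := by
        rw [g1, Real.norm_eq_abs, abs_mul, abs_mul, abs_mul, abs_pow]
    _ ≤ 1 * (2*(n:ℝ)+1) * (r^(2*n) * 1) := by
        apply mul_le_mul
        · apply mul_le_mul hA (le_of_eq (abs_of_pos (by linarith))) (abs_nonneg _) one_pos.le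
        · exact mul_le_mul h1 hc (abs_nonneg _) (pow_nonneg hr0.le _)
        · positivity
        · positivity
    _ = (2*(n:ℝ)+1) * r^(2*n) := by ring
    _ ≤ (2*(n:ℝ)+1) * ((r^2)^n / r * (2*(n:ℝ)+1)) := by
        apply mul_le_mul_of_nonneg_left hrp (by linarith)
    _ = u r n := by rw [u]; ring

lemma g2_bound (n : ℕ) : ‖g2 n y‖ ≤ u r n := by
  have h1 : |Real.sin y|^(2*n-1) ≤ r^(2*n-1) := sin_pow_le hr0 hr1 hs _
  have h2 : |Real.sin y|^(2*n) * |Real.sin y| ≤ r^(2*n-1) := by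
    have e : |Real.sin y|^(2*n) * |Real.sin y| = |Real.sin y|^(2*n+1) := by
      rw [← pow_succ]
    rw [e]
    exact (sin_pow_le hr0 hr1 hs _).trans (r_le_one_pow hr0 hr1 (by omega))
  have hA : |A n| ≤ 1 := by rw [abs_A_mul]; exact A_le_one n
  have hc : |Real.cos y| ≤ 1 := Real.abs_cos_le_one y
  have hn1 : (1:ℝ) ≤ 2*(n:ℝ)+1 := by nlinarith [Nat.cast_nonneg (α := ℝ) n]
  have hn0 : (0:ℝ) ≤ 2*(n:ℝ) := by positivity
  have hrnn : (0:ℝ) ≤ r^(2*n-1) := pow_nonneg hr0.le _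
  have hsnn : (0:ℝ) ≤ |Real.sin y|^(2*n-1) := pow_nonneg (abs_nonneg _) _
  have t1 : |(2*(n:ℝ)) * Real.sin y ^ (2*n-1) * Real.cos y * Real.cos y| ≤
      2*(n:ℝ) * r^(2*n-1) := by
    rw [abs_mul, abs_mul, abs_mul, abs_pow, abs_of_nonneg hn0]
    calc 2*(n:ℝ) * |Real.sin y|^(2*n-1) * |Real.cos y| * |Real.cos y|
        ≤ 2*(n:ℝ) * |Real.sin y|^(2*n-1) * 1 * 1 := by
          apply mul_le_mul _ hc (abs_nonneg _) (by positivity)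
          apply mul_le_mul _ hc (abs_nonneg _) (by positivity)
          exact le_refl _
      _ = 2*(n:ℝ) * |Real.sin y|^(2*n-1) := by ring
      _ ≤ 2*(n:ℝ) * r^(2*n-1) := mul_le_mul_of_nonneg_left h1 hn0
  have t2 : |Real.sin y ^ (2*n) * Real.sin y| ≤ r^(2*n-1) := by
    rw [abs_mul, abs_pow]; exact h2
  have habs : |(2*(n:ℝ)) * Real.sin y ^ (2*n-1) * Real.cos y * Real.cos y -
      Real.sin y ^ (2*n) * Real.sin y| ≤ (2*(n:ℝ)+1) * r^(2*n-1) := by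
    calc |(2*(n:ℝ)) * Real.sin y ^ (2*n-1) * Real.cos y * Real.cos y -
        Real.sin y ^ (2*n) * Real.sin y| ≤
        |(2*(n:ℝ)) * Real.sin y ^ (2*n-1) * Real.cos y * Real.cos y| +
        |Real.sin y ^ (2*n) * Real.sin y| := abs_sub _ _
      _ ≤ 2*(n:ℝ) * r^(2*n-1) + r^(2*n-1) := add_le_add t1 t2
      _ = (2*(n:ℝ)+1) * r^(2*n-1) := by ring
  have hrp := r_pow_pred hr0 hr1 n
  calc ‖g2 n y‖ = |A n * (2*(n:ℝ)+1)| * |(2*(n:ℝ)) * Real.sin y ^ (2*n-1) * Real.cos y *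
        Real.cos y - Real.sin y ^ (2*n) * Real.sin y| := by
        rw [g2, Real.norm_eq_abs, abs_mul]
    _ ≤ (1 * (2*(n:ℝ)+1)) * ((2*(n:ℝ)+1) * r^(2*n-1)) := by
        apply mul_le_mul _ habs (abs_nonneg _) (by positivity)
        rw [abs_mul]
        apply mul_le_mul hA (le_of_eq (abs_of_pos (by linarith))) (abs_nonneg _) one_pos.le
    _ = (2*(n:ℝ)+1)^2 * r^(2*n-1) := by ring
    _ ≤ (2*(n:ℝ)+1)^2 * ((r^2)^n / r) := by
        apply mul_le_mul_of_nonneg_left hrp (by positivity)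
    _ = u r n := by rw [u]; ring

end bounds

lemma A_zero : A 0 = 1 := by simp [A, poch]

lemma g2_eq (n : ℕ) (y : ℝ) :
    g2 n y = A n * ((2*(n:ℝ)+1)*(2*(n:ℝ))) * Real.sin y ^ (2*n-1)
      - A n * (2*(n:ℝ)+1)^2 * Real.sin y ^ (2*n+1) := by
  cases n with
  | zero =>
    simp [g2]
  | succ n =>
    simp only [g2, show 2*(n+1)-1 = 2*n+1 from by omega]
    push_cast
    linear_combination (A (n+1) * (2*(n:ℝ)+3) * (2*(n:ℝ)+2) * Real.sin y ^ (2*n+1)) *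
      (Real.sin_sq_add_cos_sq y)

lemma tsum_g2 {r y : ℝ} (hr0 : 0 < r) (hr1 : r < 1) (hs : |Real.sin y| ≤ r) :
    ∑' n, g2 n y = -(4/9) * ∑' n, g n y := by
  have hr1' : r ≤ 1 := hr1.le
  have hu : Summable (u r) := by
    have := (summable_sq_geom (r := r^2) (by positivity) (by nlinarith)).div_const r
    exact this.congr fun n => by rw [u]
  have hsumg : Summable (fun n => g n y) :=
    Summable.of_norm_bounded hu (fun n => g_bound hr0 hr1' hs n)
  have habsA : ∀ n : ℕ, |A n| ≤ 1 := fun n => by rw [abs_A_mul]; exact A_le_one n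
  have hsin_le : ∀ k : ℕ, |Real.sin y| ^ k ≤ r ^ k :=
    fun k => pow_le_pow_left₀ (abs_nonneg _) hs k
  have hsumh : Summable (fun n => A n * ((2*(n:ℝ)+1)*(2*(n:ℝ))) * Real.sin y ^ (2*n-1)) := by
    apply Summable.of_norm_bounded hu
    intro n
    have hn0 : (0:ℝ) ≤ 2*(n:ℝ) := by positivity
    have hfac : |(2*(n:ℝ)+1)*(2*(n:ℝ))| ≤ (2*(n:ℝ)+1)^2 := by
      rw [abs_of_nonneg (by positivity)]; nlinarith
    calc ‖A n * ((2*(n:ℝ)+1)*(2*(n:ℝ))) * Real.sin y ^ (2*n-1)‖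
        = |A n| * |(2*(n:ℝ)+1)*(2*(n:ℝ))| * |Real.sin y| ^ (2*n-1) := by
          rw [Real.norm_eq_abs, abs_mul, abs_mul, abs_pow]
      _ ≤ 1 * (2*(n:ℝ)+1)^2 * r ^ (2*n-1) := by
          apply mul_le_mul _ (hsin_le _) (pow_nonneg (abs_nonneg _) _) (by positivity)
          exact mul_le_mul (habsA n) hfac (abs_nonneg _) one_pos.le
      _ ≤ (2*(n:ℝ)+1)^2 * ((r^2)^n / r) := by
          rw [one_mul]
          exact mul_le_mul_of_nonneg_left (r_pow_pred hr0 hr1' n) (by positivity)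
      _ = u r n := by rw [u]; ring
  have hsumw : Summable (fun n => A n * (2*(n:ℝ)+1)^2 * Real.sin y ^ (2*n+1)) := by
    apply Summable.of_norm_bounded hu
    intro n
    calc ‖A n * (2*(n:ℝ)+1)^2 * Real.sin y ^ (2*n+1)‖
        = |A n| * |(2*(n:ℝ)+1)^2| * |Real.sin y| ^ (2*n+1) := by
          simp [Real.norm_eq_abs, abs_mul, abs_pow]
      _ ≤ 1 * (2*(n:ℝ)+1)^2 * r ^ (2*n+1) := by
          apply mul_le_mul _ (hsin_le _) (pow_nonneg (abs_nonneg _) _) (by positivity)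
          exact mul_le_mul (habsA n) (le_of_eq (abs_of_nonneg (by positivity))) (abs_nonneg _)
            one_pos.le
      _ ≤ (2*(n:ℝ)+1)^2 * ((r^2)^n / r) := by
          rw [one_mul]
          refine mul_le_mul_of_nonneg_left ?_ (by positivity)
          exact (r_le_one_pow hr0 hr1' (by omega : 2*n-1 ≤ 2*n+1)).trans (r_pow_pred hr0 hr1' n)
      _ = u r n := by rw [u]; ring
  set s := Real.sin y
  have step1 : ∑' n, g2 n y =
      (∑' n, A n * ((2*(n:ℝ)+1)*(2*(n:ℝ))) * s ^ (2*n-1))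
      - ∑' n, A n * (2*(n:ℝ)+1)^2 * s ^ (2*n+1) := by
    rw [← hsumh.tsum_sub hsumw]
    exact tsum_congr fun n => g2_eq n y
  have step2 : (∑' n, A n * ((2*(n:ℝ)+1)*(2*(n:ℝ))) * s ^ (2*n-1))
      = ∑' n, (A n * (2*(n:ℝ)+1)^2 * s ^ (2*n+1) - 4/9 * g n y) := by
    rw [hsumh.tsum_eq_zero_add]
    have h0 : A 0 * ((2*(((0:ℕ)):ℝ)+1)*(2*(((0:ℕ)):ℝ))) * s ^ (2*0-1) = 0 := by norm_num
    rw [h0, zero_add]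
    apply tsum_congr
    intro n
    have e1 : A (n+1) * ((2*(↑(n+1):ℝ)+1)*(2*(↑(n+1):ℝ))) * s ^ (2*(n+1)-1)
        = (A (n+1) * ((2*(n:ℝ)+3) * (2*(n:ℝ)+2))) * s ^ (2*n+1) := by
      rw [show 2*(n+1)-1 = 2*n+1 from by omega]
      push_cast; ring
    rw [e1, A_rec n, g]
    ring
  rw [step1, step2, hsumw.tsum_sub (hsumg.mul_left (4/9))]
  rw [tsum_mul_left]
  ring

lemma R_eq {x : ℝ} (hx0 : 0 ≤ x) (hx : x < π/2) :
    (∑' n, g n x) = 3/2 * Real.sin (2/3 * x) := by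
  have hpi : (0:ℝ) < π/2 := by positivity
  set b := (x + π/2)/2 with hbdef
  have hxb : x < b := by rw [hbdef]; linarith
  have hb0 : 0 < b := by rw [hbdef]; linarith
  have hbp : b < π/2 := by rw [hbdef]; linarith
  set r := Real.sin b with hrdef
  have hr0 : 0 < r := Real.sin_pos_of_pos_of_lt_pi hb0 (by linarith)
  have hr1 : r < 1 := by
    have h := Real.strictMonoOn_sin ⟨by linarith, hbp.le⟩
      ⟨by linarith, le_refl _⟩ hbp
    rwa [Real.sin_pi_div_two] at h
  have hsin : ∀ y ∈ Set.Ioo (-b) b, |Real.sin y| ≤ r := by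
    intro y hy
    rw [abs_le]
    have hmem1 : y ∈ Set.Icc (-(π/2)) (π/2) := ⟨by linarith [hy.1], by linarith [hy.2]⟩
    have hmemb : b ∈ Set.Icc (-(π/2)) (π/2) := ⟨by linarith, hbp.le⟩
    have hmemnb : -b ∈ Set.Icc (-(π/2)) (π/2) := ⟨by linarith, by linarith⟩
    constructor
    · have := Real.strictMonoOn_sin.monotoneOn hmemnb hmem1 hy.1.le
      rw [Real.sin_neg] at this
      linarith
    · exact Real.strictMonoOn_sin.monotoneOn hmem1 hmemb hy.2.le
  have hu : Summable (u r) := by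
    have := (summable_sq_geom (r := r^2) (by positivity) (by nlinarith)).div_const r
    exact this.congr fun n => by rw [u]
  have hopen : IsOpen (Set.Ioo (-b) b) := isOpen_Ioo
  have hconn : IsPreconnected (Set.Ioo (-b) b) := (convex_Ioo _ _).isPreconnected
  have h0mem : (0:ℝ) ∈ Set.Ioo (-b) b := ⟨by linarith, hb0⟩
  have hg0 : Summable (fun n => g n 0) := by
    apply summable_zero.congr
    intro n
    simp [g, Real.sin_zero, zero_pow (by omega : 2*n+1 ≠ 0)]
  have hg10 : Summable (fun n => g1 n 0) := by
    apply summable_of_ne_finset_zero (s := {0})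
    intro n hn
    have hn' : n ≠ 0 := by simpa using hn
    simp [g1, Real.sin_zero, zero_pow (by omega : 2*n ≠ 0)]
  have key1 : ∀ y ∈ Set.Ioo (-b) b, HasDerivAt (fun z => ∑' n, g n z) (∑' n, g1 n y) y :=
    fun y hy => hasDerivAt_tsum_of_isPreconnected hu hopen hconn
      (fun n z hz => hasDerivAt_g n z) (fun n z hz => g1_bound hr0 hr1.le (hsin z hz) n)
      h0mem hg0 hy
  have key2 : ∀ y ∈ Set.Ioo (-b) b,
      HasDerivAt (fun z => ∑' n, g1 n z) (-(4/9) * ∑' n, g n y) y := by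
    intro y hy
    have h := hasDerivAt_tsum_of_isPreconnected hu hopen hconn
      (fun n z hz => hasDerivAt_g1 n z) (fun n z hz => g2_bound hr0 hr1.le (hsin z hz) n)
      h0mem hg10 hy
    rwa [tsum_g2 hr0 hr1 (hsin y hy)] at h
  set v : ℝ → ℝ := fun θ => (∑' n, g n θ) - 3/2 * Real.sin (2/3*θ) with hvdef
  set V : ℝ → ℝ := fun θ => (∑' n, g1 n θ) - Real.cos (2/3*θ) with hVdef
  have hdv : ∀ y ∈ Set.Ioo (-b) b, HasDerivAt v (V y) y := by
    intro y hy
    have ha : HasDerivAt (fun θ : ℝ => (2/3)*θ) (2/3) y := by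
      simpa using (hasDerivAt_id y).const_mul (2/3)
    have hsin' := (ha.sin).const_mul (3/2)
    have := (key1 y hy).sub hsin'
    refine this.congr_deriv ?_
    simp only [hVdef]
    ring
  have hdV : ∀ y ∈ Set.Ioo (-b) b, HasDerivAt V (-(4/9) * v y) y := by
    intro y hy
    have ha : HasDerivAt (fun θ : ℝ => (2/3)*θ) (2/3) y := by
      simpa using (hasDerivAt_id y).const_mul (2/3)
    have hcos' := ha.cos
    have := (key2 y hy).sub hcos'
    refine this.congr_deriv ?_
    simp only [hvdef]
    ring
  set E : ℝ → ℝ := fun θ => 4/9 * (v θ)^2 + (V θ)^2 with hEdef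
  have hE : ∀ y ∈ Set.Ioo (-b) b, HasDerivAt E 0 y := by
    intro y hy
    have h1 := ((hdv y hy).pow 2).const_mul (4/9)
    have h2 := (hdV y hy).pow 2
    have := h1.add h2
    refine this.congr_deriv ?_
    push_cast
    ring
  have hsub : Set.Icc (0:ℝ) x ⊆ Set.Ioo (-b) b :=
    fun z hz => ⟨by linarith [hz.1], by linarith [hz.2]⟩
  have hconst := constant_of_has_deriv_right_zero (f := E) (a := 0) (b := x)
    (fun z hz => (hE z (hsub hz)).continuousAt.continuousWithinAt)
    (fun z hz => ((hE z (hsub ⟨hz.1, hz.2.le⟩)).hasDerivWithinAt))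
  have hEx : E x = E 0 := hconst x ⟨hx0, le_refl x⟩
  have hR0 : (∑' n, g n 0) = 0 := by
    rw [tsum_congr (fun n => by
      simp [g, Real.sin_zero, zero_pow (by omega : 2*n+1 ≠ 0)] : ∀ n, g n 0 = (0:ℝ))]
    exact tsum_zero
  have hR10 : (∑' n, g1 n 0) = 1 := by
    rw [tsum_eq_single 0 (fun n hn => by
      simp [g1, Real.sin_zero, zero_pow (by omega : 2*n ≠ 0), hn]
      )]
    · simp [g1, A_zero]
  have hv0 : v 0 = 0 := by simp [hvdef, hR0]
  have hV0 : V 0 = 0 := by simp [hVdef, hR10]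
  have hE0 : E 0 = 0 := by rw [hEdef]; simp [hv0, hV0]
  have hvx : v x = 0 := by
    clear_value v V E
    have h1 : 4/9 * (v x)^2 + (V x)^2 = 0 := by
      have hh : E x = 0 := hEx.trans hE0
      rw [hEdef] at hh
      simpa using hh
    have h2 : (v x)^2 ≤ 0 := by nlinarith [sq_nonneg (V x)]
    have h3 : (v x)^2 = 0 := le_antisymm h2 (sq_nonneg _)
    exact pow_eq_zero_iff two_ne_zero |>.mp h3
  have := hvx
  rw [hvdef] at this
  linarith [this]

lemma B_eq_prod (n : ℕ) : B n = ∏ i ∈ Finset.range n, (2*(i:ℝ)+1)/(2*(i:ℝ)+2) := by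
  rw [B, poch, poch, ← Finset.prod_div_distrib]
  apply Finset.prod_congr rfl
  intro i _
  rw [div_eq_div_iff (by positivity) (by positivity)]
  ring

lemma wallis_half (n : ℕ) :
    ∫ x in (0:ℝ)..(π/2), Real.sin x ^ (2*n) = (π/2) * B n := by
  have hcont : Continuous (fun x : ℝ => Real.sin x ^ (2*n)) := Real.continuous_sin.pow _
  have hrefl : ∫ x in (0:ℝ)..(π/2), Real.sin x ^ (2*n)
      = ∫ x in (π/2)..π, Real.sin x ^ (2*n) := by
    have h1 : ∫ x in (0:ℝ)..(π/2), Real.sin (π - x) ^ (2*n)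
        = ∫ x in (π - π/2)..(π - 0), Real.sin x ^ (2*n) :=
      intervalIntegral.integral_comp_sub_left (fun x => Real.sin x ^ (2*n)) π
    have h2 : ∀ x : ℝ, Real.sin (π - x) ^ (2*n) = Real.sin x ^ (2*n) := fun x => by
      rw [Real.sin_pi_sub]
    simp_rw [h2] at h1
    rw [h1, show π - π/2 = π/2 by ring, show π - (0:ℝ) = π by ring]
  have hsplit : (∫ x in (0:ℝ)..(π/2), Real.sin x ^ (2*n))
      + ∫ x in (π/2)..π, Real.sin x ^ (2*n) = ∫ x in (0:ℝ)..π, Real.sin x ^ (2*n) :=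
    intervalIntegral.integral_add_adjacent_intervals (hcont.intervalIntegrable _ _)
      (hcont.intervalIntegrable _ _)
  have hfull : ∫ x in (0:ℝ)..π, Real.sin x ^ (2*n)
      = π * ∏ i ∈ Finset.range n, (2*(i:ℝ)+1)/(2*(i:ℝ)+2) := integral_sin_pow_even n
  rw [← hrefl] at hsplit
  rw [B_eq_prod]
  linarith [hsplit, hfull]

lemma term_eq (n : ℕ) :
    poch (1/6) n * poch (5/6) n * poch (1/2) n /
      (poch 1 n * poch (3/2) n * (n.factorial : ℝ)) * (1:ℝ)^n = A n * B n := by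
  rw [one_pow, mul_one, A, B]
  have h1 := poch_pos (by norm_num : (0:ℝ) < 1) n
  have h32 := poch_pos (by norm_num : (0:ℝ) < 3/2) n
  have hf : (0:ℝ) < n.factorial := by exact_mod_cast n.factorial_pos
  rw [div_mul_div_comm]
  ring_nf

open MeasureTheory in
lemma integral_term (n : ℕ) :
    ∫ x in Set.Ioo (0:ℝ) (π/2), A n * Real.sin x ^ (2*n) = A n * B n * (π/2) := by
  have hle : (0:ℝ) ≤ π/2 := by positivity
  rw [← integral_Ioc_eq_integral_Ioo, ← intervalIntegral.integral_of_le hle,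
    intervalIntegral.integral_const_mul, wallis_half]
  ring

open MeasureTheory in
lemma swap_sum_integral :
    ∑' n : ℕ, A n * B n
      = (2/π) * ∫ x in Set.Ioo (0:ℝ) (π/2), (∑' n : ℕ, A n * Real.sin x ^ (2*n)) := by
  have hle : (0:ℝ) ≤ π/2 := by positivity
  have hnn : ∀ (n : ℕ) (x : ℝ), 0 ≤ A n * Real.sin x ^ (2*n) := fun n x =>
    mul_nonneg (A_pos n).le ((even_two_mul n).pow_nonneg _)
  have hcont : ∀ n : ℕ, Continuous (fun x : ℝ => A n * Real.sin x ^ (2*n)) :=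
    fun n => continuous_const.mul (Real.continuous_sin.pow _)
  have hint : ∀ n : ℕ, IntegrableOn (fun x : ℝ => A n * Real.sin x ^ (2*n))
      (Set.Ioo (0:ℝ) (π/2)) volume := by
    intro n
    have := ((hcont n).intervalIntegrable (μ := MeasureTheory.volume) 0 (π/2))
    rw [intervalIntegrable_iff_integrableOn_Ioc_of_le hle] at this
    exact this.mono_set Set.Ioo_subset_Ioc_self
  have hsummable : Summable (fun n => A n * B n * (π/2)) := summable_AB.mul_right _
  have hswap := MeasureTheory.integral_tsum
      (f := fun (n : ℕ) (x : ℝ) => A n * Real.sin x ^ (2*n))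
      (μ := volume.restrict (Set.Ioo (0:ℝ) (π/2)))
      (fun n => (hcont n).aestronglyMeasurable) ?_
  · rw [hswap]
    have : ∀ n : ℕ, ∫ x in Set.Ioo (0:ℝ) (π/2), A n * Real.sin x ^ (2*n) = A n * B n * (π/2) :=
      integral_term
    rw [tsum_congr this, ← tsum_mul_left]
    apply tsum_congr
    intro n
    have hpi : (π:ℝ) ≠ 0 := Real.pi_ne_zero
    field_simp
  · have heach : ∀ n : ℕ, ∫⁻ x, ‖A n * Real.sin x ^ (2*n)‖ₑ
        ∂(volume.restrict (Set.Ioo (0:ℝ) (π/2))) = ENNReal.ofReal (A n * B n * (π/2)) := by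
      intro n
      rw [← integral_term n, MeasureTheory.ofReal_integral_eq_lintegral_ofReal (hint n)
        (Filter.Eventually.of_forall (fun x => hnn n x))]
      apply lintegral_congr
      intro x
      rw [Real.enorm_eq_ofReal (hnn n x)]
    rw [tsum_congr heach, ← ENNReal.ofReal_tsum_of_nonneg
      (fun n => by have := (A_pos n).le; have := (B_pos n).le; positivity) hsummable]
    exact ENNReal.ofReal_ne_top

lemma tsum_even_eq {x : ℝ} (hx0 : 0 < x) (hx : x < π/2) :
    (∑' n : ℕ, A n * Real.sin x ^ (2*n))
      = 3 * Real.cos (x/3) / (3 - 4 * Real.sin (x/3)^2) := by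
  have hsx : 0 < Real.sin x := Real.sin_pos_of_pos_of_lt_pi hx0 (by linarith [Real.pi_pos])
  have e1 : Real.sin x * ∑' n : ℕ, A n * Real.sin x ^ (2*n) = ∑' n : ℕ, g n x := by
    rw [← tsum_mul_left]
    apply tsum_congr
    intro n
    rw [g, pow_succ]
    ring
  rw [R_eq hx0.le hx] at e1
  -- trig identities
  set t := x/3 with htdef
  have hx3 : x = 3 * t := by rw [htdef]; ring
  have hsin3 : Real.sin x = 3 * Real.sin t - 4 * Real.sin t ^ 3 := by
    rw [hx3, Real.sin_three_mul]
  have hsin2 : Real.sin (2/3 * x) = 2 * Real.sin t * Real.cos t := by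
    rw [show 2/3 * x = 2 * t by rw [htdef]; ring, Real.sin_two_mul]
  have hst : 0 < Real.sin t := Real.sin_pos_of_pos_of_lt_pi (by rw [htdef]; linarith)
    (by rw [htdef]; linarith [Real.pi_pos])
  have hstlt : Real.sin t < 1/2 := by
    have hmono := Real.strictMonoOn_sin (a := t) (b := π/6)
      ⟨by rw [htdef]; linarith [Real.pi_pos], by rw [htdef]; linarith [Real.pi_pos]⟩
      ⟨by linarith [Real.pi_pos], by linarith [Real.pi_pos]⟩
      (by rw [htdef]; linarith)
    rwa [Real.sin_pi_div_six] at hmono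
  have hden : 0 < 3 - 4 * Real.sin t ^ 2 := by nlinarith
  have hsinx : Real.sin x = Real.sin t * (3 - 4 * Real.sin t ^ 2) := by
    rw [hsin3]; ring
  -- solve for the tsum
  have : (∑' n : ℕ, A n * Real.sin x ^ (2*n)) = 3/2 * Real.sin (2/3*x) / Real.sin x := by
    field_simp at e1 ⊢
    linarith [e1]
  rw [this, hsin2, hsinx]
  rw [div_eq_div_iff (by positivity) (by positivity)]
  ring

noncomputable def Phi (θ : ℝ) : ℝ :=
  3 * Real.sqrt 3 / 4 * (Real.log (Real.sqrt 3 + 2 * Real.sin (θ/3))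
    - Real.log (Real.sqrt 3 - 2 * Real.sin (θ/3)))

lemma sqrt3_pos : (0:ℝ) < Real.sqrt 3 := Real.sqrt_pos.mpr (by norm_num)

lemma sqrt3_sq : Real.sqrt 3 * Real.sqrt 3 = 3 := Real.mul_self_sqrt (by norm_num)

lemma sqrt3_gt_one : (1:ℝ) < Real.sqrt 3 := by
  nlinarith [sqrt3_sq, sqrt3_pos]

lemma sin_third_mem {θ : ℝ} (h0 : 0 ≤ θ) (h1 : θ ≤ π/2) :
    0 ≤ Real.sin (θ/3) ∧ Real.sin (θ/3) ≤ 1/2 := by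
  constructor
  · apply Real.sin_nonneg_of_nonneg_of_le_pi (by linarith)
    linarith [Real.pi_pos]
  · have := Real.strictMonoOn_sin.monotoneOn (a := θ/3) (b := π/6)
      ⟨by linarith [Real.pi_pos], by linarith [Real.pi_pos]⟩
      ⟨by linarith [Real.pi_pos], by linarith [Real.pi_pos]⟩
      (by linarith)
    rwa [Real.sin_pi_div_six] at this

lemma hasDerivAt_Phi {θ : ℝ} (h0 : 0 ≤ θ) (h1 : θ ≤ π/2) :
    HasDerivAt Phi (3 * Real.cos (θ/3) / (3 - 4 * Real.sin (θ/3)^2)) θ := by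
  obtain ⟨hs0, hs1⟩ := sin_third_mem h0 h1
  set s := Real.sin (θ/3) with hsdef
  have hpos1 : 0 < Real.sqrt 3 + 2 * s := by linarith [sqrt3_pos]
  have hpos2 : 0 < Real.sqrt 3 - 2 * s := by linarith [sqrt3_gt_one]
  have hd3 : HasDerivAt (fun θ : ℝ => θ/3) (1/3) θ := by
    simpa using (hasDerivAt_id θ).div_const 3
  have hdsin : HasDerivAt (fun θ : ℝ => Real.sin (θ/3)) (Real.cos (θ/3) * (1/3)) θ := hd3.sin
  have hda : HasDerivAt (fun θ : ℝ => Real.sqrt 3 + 2 * Real.sin (θ/3))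
      (2 * (Real.cos (θ/3) * (1/3))) θ := (hdsin.const_mul 2).const_add _
  have hdb : HasDerivAt (fun θ : ℝ => Real.sqrt 3 - 2 * Real.sin (θ/3))
      (-(2 * (Real.cos (θ/3) * (1/3)))) θ := ((hdsin.const_mul 2).neg).const_add _
  have hla := hda.log (ne_of_gt hpos1)
  have hlb := hdb.log (ne_of_gt hpos2)
  have := ((hla.sub hlb).const_mul (3 * Real.sqrt 3 / 4))
  refine this.congr_deriv ?_
  symm
  rw [← hsdef]
  have hbd : (Real.sqrt 3 + 2*s) * (Real.sqrt 3 - 2*s) = 3 - 4*s^2 := by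
    nlinarith [sqrt3_sq]
  rw [div_sub_div _ _ (ne_of_gt hpos1) (ne_of_gt hpos2), hbd, ← mul_div_assoc]
  congr 1
  linear_combination (-Real.cos (θ/3)) * sqrt3_sq

lemma denom_cont : ContinuousOn (fun x : ℝ => 3 * Real.cos (x/3) / (3 - 4 * Real.sin (x/3)^2))
    (Set.uIcc (0:ℝ) (π/2)) := by
  have huIcc : Set.uIcc (0:ℝ) (π/2) = Set.Icc 0 (π/2) := Set.uIcc_of_le (by positivity)
  rw [huIcc]
  apply ContinuousOn.div
  · fun_prop
  · fun_prop
  · intro x hx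
    obtain ⟨hs0, hs1⟩ := sin_third_mem hx.1 hx.2
    nlinarith

lemma ftc_eval :
    ∫ x in (0:ℝ)..(π/2), 3 * Real.cos (x/3) / (3 - 4 * Real.sin (x/3)^2)
      = 3 * Real.sqrt 3 / 4 * Real.log (2 + Real.sqrt 3) := by
  have huIcc : Set.uIcc (0:ℝ) (π/2) = Set.Icc 0 (π/2) := Set.uIcc_of_le (by positivity)
  have h := intervalIntegral.integral_eq_sub_of_hasDerivAt
    (f := Phi) (f' := fun x => 3 * Real.cos (x/3) / (3 - 4 * Real.sin (x/3)^2))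
    (a := (0:ℝ)) (b := π/2) ?_ ?_
  · rw [h]
    have hPhi0 : Phi 0 = 0 := by simp [Phi]
    have hs : Real.sin ((π/2)/3) = 1/2 := by
      rw [show (π/2)/3 = π/6 by ring, Real.sin_pi_div_six]
    have hPhi1 : Phi (π/2) = 3 * Real.sqrt 3 / 4 * Real.log (2 + Real.sqrt 3) := by
      rw [Phi, hs]
      congr 1
      rw [← Real.log_div (by positivity) (by nlinarith [sqrt3_gt_one])]
      congr 1
      rw [div_eq_iff (by nlinarith [sqrt3_gt_one])]
      nlinarith [sqrt3_sq]
    rw [hPhi0, hPhi1, sub_zero]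
  · intro x hx
    rw [huIcc] at hx
    exact hasDerivAt_Phi hx.1 hx.2
  · exact denom_cont.intervalIntegrable

end Hyp

open Hyp in
theorem stmt0 :
    F32 (1/6) (5/6) (1/2) 1 (3/2) 1
      = 3 * Real.sqrt 3 / (2 * π) * Real.log (2 + Real.sqrt 3) := by
  have hle : (0:ℝ) ≤ π/2 := by positivity
  unfold F32
  rw [tsum_congr Hyp.term_eq, Hyp.swap_sum_integral,
    MeasureTheory.setIntegral_congr_fun measurableSet_Ioo
      (fun x hx => Hyp.tsum_even_eq hx.1 hx.2),
    ← MeasureTheory.integral_Ioc_eq_integral_Ioo,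
    ← intervalIntegral.integral_of_le hle, Hyp.ftc_eval]
  have hpi : (π:ℝ) ≠ 0 := Real.pi_ne_zero
  field_simp
  ring
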